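/- In the formal double zeta space D_{13}, the relation 12 Z_{3,10} + 14 Z_{5,8} - 5 Z_{7,6} - 18 Z_{9,4} = -(3/2) Z_{13} holds as a consequence of the defining double shuffle relations. -/
import Mathlib


/-- In the formal double zeta space `D₁₃`: in any realization `Z, Zk` of the double
shuffle relations in weight 13,
`12 Z_{3,10} + 14 Z_{5,8} - 5 Z_{7,6} - 18 Z_{9,4} = -(3/2) Z_{13}`. -/
theorem relation_weight_thirteen
    (Z : ℕ → ℕ → ℚ) (Zk : ℚ)
    (hrel : ∀ r s : ℕ, 1 ≤ r → 1 ≤ s → r + s = 13 →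
      Z r s + Z s r + Zk =
        ∑ p ∈ Finset.Icc 1 12,
          ((Nat.choose (p - 1) (r - 1) + Nat.choose (p - 1) (s - 1) : ℕ) : ℚ) * Z (13 - p) p) :
    12 * Z 3 10 + 14 * Z 5 8 - 5 * Z 7 6 - 18 * Z 9 4 = -(3 / 2) * Zk := by
  have h1 := hrel 3 10 (by norm_num) (by norm_num) (by norm_num)
  have h2 := hrel 4 9 (by norm_num) (by norm_num) (by norm_num)
  have h3 := hrel 5 8 (by norm_num) (by norm_num) (by norm_num)
  have h4 := hrel 6 7 (by norm_num) (by norm_num) (by norm_num)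
  norm_num [Finset.sum_Icc_succ_top, Nat.choose] at h1 h2 h3 h4
  linear_combination 6*h1 - 9*h2 + 7*h3 - (5/2)*h4
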